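/- arXiv:1902.00329 — 5 statements merged into one kernel-verified Lean document; each statement's English description precedes it below -/
import Mathlib

section
/- GL(X → U) = 0 if and only if there exists a single permutation r of {1,...,n} that is a valid rank vector for all posterior distributions p_{X|U=u} simultaneously (i.e., for every u with p_U(u) > 0 and all i, j, p_{X|U=u}(i) > p_{X|U=u}(j) implies r(i) < r(j)). -/
noncomputable def HG {n : ℕ} (p : Fin n → ℝ) : ℝ :=
  Finset.univ.inf' Finset.univ_nonempty
    (fun r : Equiv.Perm (Fin n) => ∑ i, (((r i : ℕ) : ℝ) + 1) * p i)

namespace HGaux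

noncomputable def f {n : ℕ} (r : Equiv.Perm (Fin n)) (p : Fin n → ℝ) : ℝ :=
  ∑ i, (((r i : ℕ) : ℝ) + 1) * p i

lemma HG_le {n : ℕ} (p : Fin n → ℝ) (s : Equiv.Perm (Fin n)) : HG p ≤ f s p :=
  Finset.inf'_le _ (Finset.mem_univ s)

lemma exists_min {n : ℕ} (p : Fin n → ℝ) : ∃ r : Equiv.Perm (Fin n), HG p = f r p := by
  obtain ⟨r, _, hr⟩ := Finset.exists_mem_eq_inf' (Finset.univ_nonempty)
    (fun r : Equiv.Perm (Fin n) => ∑ i, (((r i : ℕ) : ℝ) + 1) * p i)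
  exact ⟨r, hr⟩

/-- If `r` is a valid rank vector for `p`, then `f r p ≤ f s p` for all `s`. -/
lemma valid_min {n : ℕ} (p : Fin n → ℝ) (r : Equiv.Perm (Fin n))
    (hr : ∀ i j : Fin n, p j < p i → r i < r j) (s : Equiv.Perm (Fin n)) :
    f r p ≤ f s p := by
  have hav : Antivary p (fun i => (((r i : ℕ) : ℝ) + 1)) := by
    intro i j hij
    simp only [add_lt_add_iff_right, Nat.cast_lt, Fin.val_fin_lt] at hij
    by_contra h
    exact absurd (hr j i (lt_of_not_ge h)) (not_lt.2 hij.le)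
  have := hav.sum_mul_le_sum_mul_comp_perm (σ := r⁻¹ * s)
  calc f r p = ∑ i, p i * (((r i : ℕ) : ℝ) + 1) := by
        simp [f, mul_comm]
    _ ≤ ∑ i, p i * (((r ((r⁻¹ * s) i) : ℕ) : ℝ) + 1) := this
    _ = f s p := by simp [f, mul_comm]

/-- If `r` minimizes `f · p`, then `r` is valid for `p`. -/
lemma min_valid {n : ℕ} (p : Fin n → ℝ) (r : Equiv.Perm (Fin n))
    (hr : ∀ s, f r p ≤ f s p) : ∀ i j : Fin n, p j < p i → r i < r j := by
  intro i j hpij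
  by_contra h
  have hij : i ≠ j := fun e => absurd (e ▸ hpij) (lt_irrefl _)
  have hrr : r j < r i := lt_of_le_of_ne (not_lt.1 h)
    fun e => hij (r.injective e).symm
  have := hr (r * Equiv.swap i j)
  have hsum : f (r * Equiv.swap i j) p - f r p
      = ((((r i : ℕ) : ℝ)) - ((r j : ℕ) : ℝ)) * (p j - p i) := by
    unfold HGaux.f
    rw [← Finset.sum_sub_distrib]
    rw [Finset.sum_eq_add_of_mem i j (Finset.mem_univ i) (Finset.mem_univ j) hij ?_]
    · simp [Equiv.swap_apply_left, Equiv.swap_apply_right]; ring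
    · intro k _ hk
      simp [Equiv.swap_apply_of_ne_of_ne hk.1 hk.2]
  have hneg : ((((r i : ℕ) : ℝ)) - ((r j : ℕ) : ℝ)) * (p j - p i) < 0 :=
    mul_neg_of_pos_of_neg (by simp [sub_pos]; exact_mod_cast hrr) (by linarith)
  linarith [this, hsum]

end HGaux

/-- `GL(X → U) = 0` iff a single permutation `r` is a valid rank
vector for all posteriors `p_{X|U=u}` simultaneously. -/
theorem guessing_leakage_eq_zero_iff {n : ℕ} {U : Type*} [Fintype U]
    (pU : U → ℝ) (hU0 : ∀ u, 0 ≤ pU u) (hU1 : ∑ u, pU u = 1)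
    (pXgU : U → Fin n → ℝ)
    (hX0 : ∀ u i, 0 ≤ pXgU u i) (hX1 : ∀ u, ∑ i, pXgU u i = 1)
    (pX : Fin n → ℝ) (hpX : ∀ i, pX i = ∑ u, pU u * pXgU u i) :
    HG pX - ∑ u, pU u * HG (pXgU u) = 0 ↔
      ∃ r : Equiv.Perm (Fin n), ∀ u, 0 < pU u →
        ∀ i j : Fin n, pXgU u j < pXgU u i → r i < r j := by
  have hmix : ∀ s : Equiv.Perm (Fin n), HGaux.f s pX = ∑ u, pU u * HGaux.f s (pXgU u) := by
    intro s
    unfold HGaux.f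
    simp only [hpX, Finset.mul_sum]
    rw [Finset.sum_comm]
    refine Finset.sum_congr rfl fun u _ => ?_
    exact Finset.sum_congr rfl fun i _ => by ring
  constructor
  · intro heq
    obtain ⟨r, hrmin⟩ := HGaux.exists_min pX
    refine ⟨r, fun u hu => ?_⟩
    have hterm : ∀ u, 0 ≤ pU u * (HGaux.f r (pXgU u) - HG (pXgU u)) := fun u =>
      mul_nonneg (hU0 u) (sub_nonneg.2 (HGaux.HG_le _ r))
    have hsum0 : ∑ u, pU u * (HGaux.f r (pXgU u) - HG (pXgU u)) = 0 := by
      have := hmix r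
      simp only [mul_sub, Finset.sum_sub_distrib]
      rw [← this, ← hrmin]
      linarith
    have h0 := (Finset.sum_eq_zero_iff_of_nonneg (fun u _ => hterm u)).1 hsum0 u
      (Finset.mem_univ u)
    have hfeq : HGaux.f r (pXgU u) = HG (pXgU u) := by
      rcases mul_eq_zero.1 h0 with h | h
      · exact absurd h (ne_of_gt hu)
      · linarith
    exact HGaux.min_valid (pXgU u) r (fun s => hfeq ▸ HGaux.HG_le (pXgU u) s)
  · rintro ⟨r, hr⟩
    have hle : HG pX ≤ ∑ u, pU u * HG (pXgU u) := by
      calc HG pX ≤ HGaux.f r pX := HGaux.HG_le pX r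
        _ = ∑ u, pU u * HGaux.f r (pXgU u) := hmix r
        _ = ∑ u, pU u * HG (pXgU u) := by
            refine Finset.sum_congr rfl fun u _ => ?_
            rcases eq_or_lt_of_le (hU0 u) with h | h
            · rw [← h]; ring
            · have : HGaux.f r (pXgU u) = HG (pXgU u) :=
                le_antisymm (Finset.le_inf' _ _ fun s _ => HGaux.valid_min (pXgU u) r (hr u h) s)
                  (HGaux.HG_le (pXgU u) r)
              rw [this]
    have hge : ∑ u, pU u * HG (pXgU u) ≤ HG pX := by
      refine Finset.le_inf' _ _ fun s _ => ?_
      rw [show (∑ i, (((s i : ℕ) : ℝ) + 1) * pX i) = HGaux.f s pX from rfl, hmix s]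
      exact Finset.sum_le_sum fun u _ => mul_le_mul_of_nonneg_left (HGaux.HG_le _ s) (hU0 u)
    linarith
end

section
/- Guessing leakage satisfies the post-processing inequality: if X − U − U' form a Markov chain (X and U' are conditionally independent given U) over finite alphabets, then GL(X → U') ≤ GL(X → U). -/
/-- Post-processing inequality for guessing leakage. For a Markov
chain `X − U − U'` (encoded via `p_{U|U'}` and `p_{X|U}`, with
`p_{X|U'=u'} = ∑_u p(u|u') p_{X|U=u}`), `GL(X → U') ≤ GL(X → U)`. -/
theorem guessing_leakage_post_processing {n : ℕ} {U U' : Type*}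
    [Fintype U] [Fintype U']
    (pU' : U' → ℝ) (hU'0 : ∀ u', 0 ≤ pU' u') (hU'1 : ∑ u', pU' u' = 1)
    (pUgU' : U' → U → ℝ) (hUg0 : ∀ u' u, 0 ≤ pUgU' u' u)
    (hUg1 : ∀ u', ∑ u, pUgU' u' u = 1)
    (pXgU : U → Fin n → ℝ)
    (hX0 : ∀ u i, 0 ≤ pXgU u i) (hX1 : ∀ u, ∑ i, pXgU u i = 1)
    (pU : U → ℝ) (hpU : ∀ u, pU u = ∑ u', pU' u' * pUgU' u' u)
    (pXgU' : U' → Fin n → ℝ)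
    (hXgU' : ∀ u' i, pXgU' u' i = ∑ u, pUgU' u' u * pXgU u i)
    (pX : Fin n → ℝ) (hpX : ∀ i, pX i = ∑ u, pU u * pXgU u i) :
    HG pX - ∑ u', pU' u' * HG (pXgU' u') ≤
      HG pX - ∑ u, pU u * HG (pXgU u) := by
  have key : ∀ u' : U', ∑ u, pUgU' u' u * HG (pXgU u) ≤ HG (pXgU' u') := by
    intro u'
    rw [show HG (pXgU' u') = Finset.univ.inf' Finset.univ_nonempty
      (fun r : Equiv.Perm (Fin n) => ∑ i, (((r i : ℕ) : ℝ) + 1) * pXgU' u' i) from rfl]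
    apply Finset.le_inf'
    intro r _
    calc ∑ u, pUgU' u' u * HG (pXgU u)
        ≤ ∑ u, pUgU' u' u * ∑ i, (((r i : ℕ) : ℝ) + 1) * pXgU u i := by
          apply Finset.sum_le_sum
          intro u _
          exact mul_le_mul_of_nonneg_left
            (Finset.inf'_le _ (Finset.mem_univ r)) (hUg0 u' u)
      _ = ∑ i, (((r i : ℕ) : ℝ) + 1) * pXgU' u' i := by
          simp only [hXgU', Finset.mul_sum]
          rw [Finset.sum_comm]
          apply Finset.sum_congr rfl; intro i _
          apply Finset.sum_congr rfl; intro u _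
          ring
  have main : ∑ u, pU u * HG (pXgU u) ≤ ∑ u', pU' u' * HG (pXgU' u') := by
    calc ∑ u, pU u * HG (pXgU u)
        = ∑ u', pU' u' * ∑ u, pUgU' u' u * HG (pXgU u) := by
          simp only [hpU, Finset.sum_mul, Finset.mul_sum]
          rw [Finset.sum_comm]
          apply Finset.sum_congr rfl; intro u' _
          apply Finset.sum_congr rfl; intro u _
          ring
      _ ≤ ∑ u', pU' u' * HG (pXgU' u') := by
          apply Finset.sum_le_sum
          intro u' _
          exact mul_le_mul_of_nonneg_left (key u') (hU'0 u')
  linarith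
end

section
/- Guessing leakage does not satisfy the linkage inequality: there exist finite random variables X, U, U' forming a Markov chain X − U − U' such that GL(X → U') > GL(U → U'). Concretely, take U' ~ Bern(1/2), U ∈ {1,2,3} with p_{U|U'=0} = (0.35, 0.4, 0.25) and p_{U|U'=1} = (0.3, 0.6, 0.1), and X = U mod 2; then GL(U → U') = 0 while GL(X → U') > 0. -/
/-- `p_{U|U'}` for the counterexample: `U' ~ Bern(1/2)`,
`p_{U|U'=0} = (0.35, 0.4, 0.25)`, `p_{U|U'=1} = (0.3, 0.6, 0.1)`. -/
noncomputable def pUgU' : Fin 2 → Fin 3 → ℝ :=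
  ![![0.35, 0.4, 0.25], ![0.3, 0.6, 0.1]]

/-- Posterior of `X = U mod 2` given `U'`. -/
noncomputable def pXgU' : Fin 2 → Fin 2 → ℝ :=
  fun u' x => ∑ u : Fin 3, if (u : ℕ) % 2 = (x : ℕ) then pUgU' u' u else 0

/-- Marginal of `U`. -/
noncomputable def pU : Fin 3 → ℝ := fun u => ∑ u' : Fin 2, (1 / 2) * pUgU' u' u

/-- Marginal of `X`. -/
noncomputable def pX : Fin 2 → ℝ := fun x => ∑ u' : Fin 2, (1 / 2) * pXgU' u' x

lemma HG_le {n : ℕ} (p : Fin n → ℝ) (r : Equiv.Perm (Fin n)) :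
    HG p ≤ ∑ i, (((r i : ℕ) : ℝ) + 1) * p i :=
  Finset.inf'_le _ (Finset.mem_univ r)

lemma HG3_ge (p : Fin 3 → ℝ) (c : ℝ)
    (h : ∀ a b d : ℕ, a < 3 → b < 3 → d < 3 → a ≠ b → a ≠ d → b ≠ d →
      c ≤ ((a : ℝ)+1)*p 0 + ((b : ℝ)+1)*p 1 + ((d : ℝ)+1)*p 2) :
    c ≤ HG p := by
  apply Finset.le_inf'
  intro r _
  rw [Fin.sum_univ_three]
  exact h (r 0).val (r 1).val (r 2).val (r 0).isLt (r 1).isLt (r 2).isLt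
    (fun h => absurd (r.injective (Fin.val_injective h)) (by decide))
    (fun h => absurd (r.injective (Fin.val_injective h)) (by decide))
    (fun h => absurd (r.injective (Fin.val_injective h)) (by decide))

lemma HG2_ge (p : Fin 2 → ℝ) (c : ℝ)
    (h : ∀ a b : ℕ, a < 2 → b < 2 → a ≠ b →
      c ≤ ((a : ℝ)+1)*p 0 + ((b : ℝ)+1)*p 1) :
    c ≤ HG p := by
  apply Finset.le_inf'
  intro r _
  rw [Fin.sum_univ_two]
  exact h (r 0).val (r 1).val (r 0).isLt (r 1).isLt
    (fun h => absurd (r.injective (Fin.val_injective h)) (by decide))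

lemma swap3 : ((Equiv.swap (0:Fin 3) 1) 0 = 1) ∧ ((Equiv.swap (0:Fin 3) 1) 1 = 0) ∧
    ((Equiv.swap (0:Fin 3) 1) 2 = 2) := by decide

lemma HG3_eq (p : Fin 3 → ℝ) (c : ℝ) (hle : 2 * p 0 + 1 * p 1 + 3 * p 2 = c)
    (h : ∀ a b d : ℕ, a < 3 → b < 3 → d < 3 → a ≠ b → a ≠ d → b ≠ d →
      c ≤ ((a : ℝ)+1)*p 0 + ((b : ℝ)+1)*p 1 + ((d : ℝ)+1)*p 2) :
    HG p = c := by
  refine le_antisymm ?_ (HG3_ge p c h)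
  have h1 := HG_le p (Equiv.swap 0 1)
  rw [Fin.sum_univ_three, swap3.1, swap3.2.1, swap3.2.2] at h1
  norm_num at h1
  linarith

lemma HG2_eq_id (p : Fin 2 → ℝ) (c : ℝ) (hle : 1 * p 0 + 2 * p 1 = c)
    (h : ∀ a b : ℕ, a < 2 → b < 2 → a ≠ b →
      c ≤ ((a : ℝ)+1)*p 0 + ((b : ℝ)+1)*p 1) :
    HG p = c := by
  refine le_antisymm ?_ (HG2_ge p c h)
  have h1 := HG_le p 1
  rw [Fin.sum_univ_two] at h1
  norm_num at h1
  linarith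

lemma HG2_eq_sw (p : Fin 2 → ℝ) (c : ℝ) (hle : 2 * p 0 + 1 * p 1 = c)
    (h : ∀ a b : ℕ, a < 2 → b < 2 → a ≠ b →
      c ≤ ((a : ℝ)+1)*p 0 + ((b : ℝ)+1)*p 1) :
    HG p = c := by
  refine le_antisymm ?_ (HG2_ge p c h)
  have h1 := HG_le p (Equiv.swap 0 1)
  rw [Fin.sum_univ_two, Equiv.swap_apply_left, Equiv.swap_apply_right] at h1
  norm_num at h1
  linarith

lemma vals0 : pUgU' 0 0 = 0.35 ∧ pUgU' 0 1 = 0.4 ∧ pUgU' 0 2 = 0.25 := by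
  norm_num [pUgU', Matrix.cons_val_two]
lemma vals1 : pUgU' 1 0 = 0.3 ∧ pUgU' 1 1 = 0.6 ∧ pUgU' 1 2 = 0.1 := by
  norm_num [pUgU', Matrix.cons_val_two]

lemma HGU0 : HG (pUgU' 0) = 1.85 := by
  apply HG3_eq
  · rw [vals0.1, vals0.2.1, vals0.2.2]; norm_num
  · intro a b d ha hb hd hab had hbd
    rw [vals0.1, vals0.2.1, vals0.2.2]
    interval_cases a <;> interval_cases b <;> interval_cases d <;> simp_all <;> norm_num

lemma HGU1 : HG (pUgU' 1) = 1.5 := by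
  apply HG3_eq
  · rw [vals1.1, vals1.2.1, vals1.2.2]; norm_num
  · intro a b d ha hb hd hab had hbd
    rw [vals1.1, vals1.2.1, vals1.2.2]
    interval_cases a <;> interval_cases b <;> interval_cases d <;> simp_all <;> norm_num

lemma valsU : pU 0 = 0.325 ∧ pU 1 = 0.5 ∧ pU 2 = 0.175 := by
  norm_num [pU, pUgU', Fin.sum_univ_two, Matrix.cons_val_two]

lemma HGU : HG pU = 1.675 := by
  apply HG3_eq
  · rw [valsU.1, valsU.2.1, valsU.2.2]; norm_num
  · intro a b d ha hb hd hab had hbd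
    rw [valsU.1, valsU.2.1, valsU.2.2]
    interval_cases a <;> interval_cases b <;> interval_cases d <;> simp_all <;> norm_num

lemma valsX0 : pXgU' 0 0 = 0.6 ∧ pXgU' 0 1 = 0.4 := by
  norm_num [pXgU', pUgU', Fin.sum_univ_three, Matrix.cons_val_two]
lemma valsX1 : pXgU' 1 0 = 0.4 ∧ pXgU' 1 1 = 0.6 := by
  norm_num [pXgU', pUgU', Fin.sum_univ_three, Matrix.cons_val_two]
lemma valsX : pX 0 = 0.5 ∧ pX 1 = 0.5 := by
  norm_num [pX, Fin.sum_univ_two, valsX0.1, valsX0.2, valsX1.1, valsX1.2]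

lemma HGX0 : HG (pXgU' 0) = 1.4 := by
  apply HG2_eq_id
  · rw [valsX0.1, valsX0.2]; norm_num
  · intro a b ha hb hab
    rw [valsX0.1, valsX0.2]
    interval_cases a <;> interval_cases b <;> simp_all <;> norm_num

lemma HGX1 : HG (pXgU' 1) = 1.4 := by
  apply HG2_eq_sw
  · rw [valsX1.1, valsX1.2]; norm_num
  · intro a b ha hb hab
    rw [valsX1.1, valsX1.2]
    interval_cases a <;> interval_cases b <;> simp_all <;> norm_num

lemma HGX : HG pX = 1.5 := by
  apply HG2_eq_id
  · rw [valsX.1, valsX.2]; norm_num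
  · intro a b ha hb hab
    rw [valsX.1, valsX.2]
    interval_cases a <;> interval_cases b <;> simp_all <;> norm_num

/-- Guessing leakage violates the linkage inequality: for the
Markov chain `X − U − U'` above, `GL(U → U') = 0` but `GL(X → U') > 0`. -/
theorem guessing_leakage_no_linkage :
    HG pU - ∑ u' : Fin 2, (1 / 2) * HG (pUgU' u') = 0 ∧
    0 < HG pX - ∑ u' : Fin 2, (1 / 2) * HG (pXgU' u') := by
  rw [Fin.sum_univ_two, Fin.sum_univ_two, HGU, HGU0, HGU1, HGX, HGX0, HGX1]
  norm_num
end

section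
/- Conditioning reduces guessing entropy: for any jointly distributed finite random variables X, U, U' with X − U − U' a Markov chain, H_G(X|U') ≥ H_G(X|U). -/
lemma HG_superadd {n : ℕ} {U : Type*} [Fintype U] (w : U → ℝ) (hw : ∀ u, 0 ≤ w u)
    (q : U → Fin n → ℝ) :
    ∑ u, w u * HG (q u) ≤ HG (fun i => ∑ u, w u * q u i) := by
  obtain ⟨r, -, hr⟩ := Finset.exists_mem_eq_inf' (Finset.univ_nonempty)
    (fun r : Equiv.Perm (Fin n) => ∑ i, (((r i : ℕ) : ℝ) + 1) * (∑ u, w u * q u i))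
  have heq : HG (fun i => ∑ u, w u * q u i) = ∑ u, w u * ∑ i, (((r i : ℕ) : ℝ) + 1) * q u i := by
    rw [HG, hr]
    simp only [Finset.mul_sum]
    rw [Finset.sum_comm]
    congr 1; ext u; congr 1; ext i; ring
  rw [heq]
  gcongr ∑ u, w u * ?_ with u
  · exact hw _
  · exact HG_le (q u) r

/-- Conditioning reduces guessing entropy. For a Markov chain
`X − U − U'`, `H_G(X|U') ≥ H_G(X|U)`. -/
theorem conditional_HG_markov {n : ℕ} {U U' : Type*} [Fintype U] [Fintype U']
    (pU' : U' → ℝ) (hU'0 : ∀ u', 0 ≤ pU' u') (hU'1 : ∑ u', pU' u' = 1)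
    (pUgU' : U' → U → ℝ) (hUg0 : ∀ u' u, 0 ≤ pUgU' u' u)
    (hUg1 : ∀ u', ∑ u, pUgU' u' u = 1)
    (pXgU : U → Fin n → ℝ)
    (hX0 : ∀ u i, 0 ≤ pXgU u i) (hX1 : ∀ u, ∑ i, pXgU u i = 1)
    (pU : U → ℝ) (hpU : ∀ u, pU u = ∑ u', pU' u' * pUgU' u' u)
    (pXgU' : U' → Fin n → ℝ)
    (hXgU' : ∀ u' i, pXgU' u' i = ∑ u, pUgU' u' u * pXgU u i) :
    ∑ u, pU u * HG (pXgU u) ≤ ∑ u', pU' u' * HG (pXgU' u') := by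
  have key : ∀ u', ∑ u, pUgU' u' u * HG (pXgU u) ≤ HG (pXgU' u') := by
    intro u'
    have := HG_superadd (pUgU' u') (hUg0 u') pXgU
    have heq : pXgU' u' = fun i => ∑ u, pUgU' u' u * pXgU u i := funext (hXgU' u')
    rw [heq]; exact this
  calc ∑ u, pU u * HG (pXgU u)
      = ∑ u', pU' u' * ∑ u, pUgU' u' u * HG (pXgU u) := by
        simp only [hpU, Finset.sum_mul, Finset.mul_sum]
        rw [Finset.sum_comm]
        congr 1; ext u; congr 1; ext u'; ring
    _ ≤ ∑ u', pU' u' * HG (pXgU' u') := by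
        gcongr ∑ u', pU' u' * ?_ with u'
        · exact hU'0 _
        · exact key u'
end

section
/- If the n entries of p_X are pairwise distinct and all conditional distributions p_{X|U=u} lie in the interior of the same rank partition region as p_X (i.e., they induce the same strict ordering of probabilities as p_X), then GL(X → U) = 0. -/
/-- If `q` respects the strict order of `pX` (in the sense below) and `rs` is
anti-monotone w.r.t. `pX`, then `rs` minimizes `∑ (r i + 1) * q i`. -/
lemma HG_eq_of_antitone {n : ℕ} (pX q : Fin n → ℝ)
    (rs : Equiv.Perm (Fin n))
    (hrs : ∀ i j : Fin n, pX j < pX i → rs i < rs j)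
    (hdistinct : ∀ i j : Fin n, i ≠ j → pX i ≠ pX j)
    (hq : ∀ i j : Fin n, pX j < pX i → q j < q i) :
    HG q = ∑ i, (((rs i : ℕ) : ℝ) + 1) * q i := by
  have hanti : Antivary q (fun i => ((rs i : ℕ) : ℝ) + 1) := by
    intro i j hij
    have hlt : rs i < rs j := by
      simp only at hij
      have h1 : ((rs i : ℕ) : ℝ) < ((rs j : ℕ) : ℝ) := by linarith
      exact_mod_cast h1
    -- rs i < rs j implies pX j < pX i
    have hij' : pX j < pX i := by
      rcases lt_trichotomy (pX i) (pX j) with h | h | h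
      · exact absurd (hrs j i h) (lt_asymm hlt)
      · rcases eq_or_ne i j with rfl | hne
        · exact absurd rfl (ne_of_lt hlt)
        · exact absurd h (hdistinct i j hne)
      · exact h
    exact (hq i j hij').le
  apply le_antisymm
  · exact Finset.inf'_le _ (Finset.mem_univ rs)
  · apply Finset.le_inf'
    intro r _
    have key := hanti.sum_smul_le_sum_smul_comp_perm (σ := r.trans rs.symm)
    simp only [smul_eq_mul] at key
    calc ∑ i, (((rs i : ℕ) : ℝ) + 1) * q i
        = ∑ i, q i * (((rs i : ℕ) : ℝ) + 1) := by
          simp_rw [mul_comm]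
      _ ≤ ∑ i, q i * (((rs ((r.trans rs.symm) i) : ℕ) : ℝ) + 1) := key
      _ = ∑ i, (((r i : ℕ) : ℝ) + 1) * q i := by
          apply Finset.sum_congr rfl
          intro i _
          simp [mul_comm]

/-- If the entries of `p_X` are pairwise distinct and every
posterior `p_{X|U=u}` induces the same strict ordering of probabilities as
`p_X`, then `GL(X → U) = 0`. -/
theorem same_rank_partition_zero_leakage {n : ℕ} {U : Type*} [Fintype U]
    (pU : U → ℝ) (hU0 : ∀ u, 0 ≤ pU u) (hU1 : ∑ u, pU u = 1)
    (pXgU : U → Fin n → ℝ)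
    (hX0 : ∀ u i, 0 ≤ pXgU u i) (hX1 : ∀ u, ∑ i, pXgU u i = 1)
    (pX : Fin n → ℝ) (hpX : ∀ i, pX i = ∑ u, pU u * pXgU u i)
    (hdistinct : ∀ i j : Fin n, i ≠ j → pX i ≠ pX j)
    (horder : ∀ u, 0 < pU u → ∀ i j : Fin n, pX j < pX i →
      pXgU u j < pXgU u i) :
    HG pX - ∑ u, pU u * HG (pXgU u) = 0 := by
  -- build the anti-monotone ranking permutation
  set τ : Equiv.Perm (Fin n) := Tuple.sort pX with hτ
  have hmono : StrictMono (pX ∘ τ) := by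
    apply (Tuple.monotone_sort pX).strictMono_of_injective
    intro a b hab
    by_contra hne
    exact hdistinct (τ a) (τ b) (fun h => hne (τ.injective h)) hab
  set rs : Equiv.Perm (Fin n) := τ.symm.trans (Fin.revPerm) with hrs_def
  have hrs : ∀ i j : Fin n, pX j < pX i → rs i < rs j := by
    intro i j hij
    have h1 : τ.symm j < τ.symm i := by
      by_contra h
      push_neg at h
      rcases lt_or_eq_of_le h with h | h
      · have := hmono h
        simp only [Function.comp_apply, Equiv.apply_symm_apply] at this
        exact absurd hij (not_lt.2 this.le)
      · have hji : i = j := by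
          have := congrArg τ h
          simpa using this
        subst hji; exact lt_irrefl _ hij
    simpa [hrs_def, Fin.rev_lt_rev] using h1
  have hpXeq : HG pX = ∑ i, (((rs i : ℕ) : ℝ) + 1) * pX i :=
    HG_eq_of_antitone pX pX rs hrs hdistinct (fun i j h => h)
  have hterm : ∀ u, pU u * HG (pXgU u)
      = pU u * ∑ i, (((rs i : ℕ) : ℝ) + 1) * pXgU u i := by
    intro u
    rcases (hU0 u).lt_or_eq with h | h
    · rw [HG_eq_of_antitone pX (pXgU u) rs hrs hdistinct (fun i j hij => horder u h i j hij)]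
    · rw [← h]; ring
  rw [hpXeq, Finset.sum_congr rfl (fun u _ => hterm u)]
  have hswap : ∑ u, pU u * ∑ i, (((rs i : ℕ) : ℝ) + 1) * pXgU u i
      = ∑ i, (((rs i : ℕ) : ℝ) + 1) * pX i := by
    have h1 : ∀ i, (((rs i : ℕ) : ℝ) + 1) * pX i
        = ∑ u, pU u * ((((rs i : ℕ) : ℝ) + 1) * pXgU u i) := by
      intro i
      rw [hpX, Finset.mul_sum]
      exact Finset.sum_congr rfl (fun u _ => by ring)
    simp_rw [h1, Finset.mul_sum]
    exact Finset.sum_comm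
  rw [hswap]
  ring
end
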